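/- Let G = (V,E) be an undirected graph with n vertices, and let G' be the bipartite DAG built from G as follows: for each vertex v_i of G create a gadget g_i with n sources s_{i1},...,s_{in} and one target t_i with edges s_{ij} → t_i; whenever (v_i,v_j) ∈ E, merge s_{ij} and s_{ji} into one source with edges to both t_i and t_j. Then in the (2,1)-I/O model with partial computations, two gadgets g_i and g_j can both be fully eliminated (all their edges deleted and both results stored) with a total of 2n + 3 unit-cost moves if and only if (v_i, v_j) ∈ E; otherwise at least 2n + 4 moves are required. -/

import Mathlib

/-! The Red-Blue Pebble Game with partial computations, in the `(M,1)`-I/O model.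
A pebble on a vertex means the corresponding word is in the cache; a blue pebble is a
"dirty" partial result that must be stored (cost 1) before it can leave the cache. -/

inductive Pebble : Type
  | red
  | blue
deriving DecidableEq

/-- A configuration: the remaining (not yet computed) edges of the DAG, and the pebble
(if any) on each vertex. -/
structure Config (V : Type) where
  edges : Finset (V × V)
  peb : V → Option Pebble

variable {V : Type} [DecidableEq V] [Fintype V]

/-- The number of pebbles currently on the graph. -/
def pebCount (c : Config V) : ℕ :=
  (Finset.univ.filter fun v => (c.peb v).isSome).card

/-- One move of the game with at most `M` pebbles, together with its cost:
(R1) place a red pebble on an empty vertex, cost 1 (LOAD);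
(R2) remove a red pebble, cost 0 (REMOVE), or change red to blue, cost 0;
(R3) change a blue pebble to red, cost 1 (STORE);
(R4) if `u` is a leaf and both `u` and `v` are pebbled, delete the edge `(u,v)` for free,
     and the pebble on `v` becomes blue (partial COMPUTE);
(R5) at most `M` pebbles are on the graph at any time. -/
inductive Step (M : ℕ) : Config V → Config V → ℕ → Prop
  | load (c : Config V) (v : V) (h : c.peb v = none) (hM : pebCount c < M) :
      Step M c ⟨c.edges, Function.update c.peb v (some Pebble.red)⟩ 1
  | remove (c : Config V) (v : V) (h : c.peb v = some Pebble.red) :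
      Step M c ⟨c.edges, Function.update c.peb v none⟩ 0
  | toBlue (c : Config V) (v : V) (h : c.peb v = some Pebble.red) :
      Step M c ⟨c.edges, Function.update c.peb v (some Pebble.blue)⟩ 0
  | store (c : Config V) (v : V) (h : c.peb v = some Pebble.blue) :
      Step M c ⟨c.edges, Function.update c.peb v (some Pebble.red)⟩ 1
  | compute (c : Config V) (u v : V) (he : (u, v) ∈ c.edges)
      (hleaf : ∀ x, (x, u) ∉ c.edges)
      (hu : (c.peb u).isSome) (hv : (c.peb v).isSome) :
      Step M c ⟨c.edges.erase (u, v), Function.update c.peb v (some Pebble.blue)⟩ 0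

/-- `Reach M c c' k`: configuration `c'` is reachable from `c` by a pebbling strategy of
total cost `k`. -/
inductive Reach (M : ℕ) : Config V → Config V → ℕ → Prop
  | refl (c : Config V) : Reach M c c 0
  | tail {a b c : Config V} {k1 k2 : ℕ} :
      Reach M a b k1 → Step M b c k2 → Reach M a c (k1 + k2)

/-- The set of costs of pebbling strategies that, starting from the DAG with edge set `E`
and an empty cache, delete all edges and store all results (no dirty blue pebble
remains). -/
def Achievable (M : ℕ) (E : Finset (V × V)) : Set ℕ :=
  {k | ∃ c' : Config V, Reach M ⟨E, fun _ => none⟩ c' k ∧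
    c'.edges = ∅ ∧ ∀ v, c'.peb v ≠ some Pebble.blue}

/-- The source vertex `s_{ij}` of gadget `g_i`, as an index: when `v_i` and `v_j` are
adjacent in `G`, the sources `s_{ij}` and `s_{ji}` are merged into the single canonical
(sorted) pair; otherwise `s_{ij}` is the private source `(i, j)`. -/
def src {n : ℕ} (G : SimpleGraph (Fin n)) [DecidableRel G.Adj] (i j : Fin n) :
    Fin n × Fin n :=
  if G.Adj i j ∧ j < i then (j, i) else (i, j)

/-- The edge set of the bipartite DAG `G'` built from `G`: vertices are the targets `t_i`
(`Sum.inl i`) and the sources (`Sum.inr` of an index pair); for every `i` and `j` there is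
an edge from the source `s_{ij}` to the target `t_i`. -/
def gadgetEdges {n : ℕ} (G : SimpleGraph (Fin n)) [DecidableRel G.Adj] :
    Finset ((Fin n ⊕ Fin n × Fin n) × (Fin n ⊕ Fin n × Fin n)) :=
  Finset.univ.image fun p : Fin n × Fin n => (Sum.inr (src G p.1 p.2), Sum.inl p.1)

/-- The edges of the two gadgets `g_i` and `g_j` only: all edges of the gadget graph
entering the targets `t_i` or `t_j`. -/
def twoGadgetEdges {n : ℕ} (G : SimpleGraph (Fin n)) [DecidableRel G.Adj] (i j : Fin n) :
    Finset ((Fin n ⊕ Fin n × Fin n) × (Fin n ⊕ Fin n × Fin n)) :=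
  (Finset.univ.filter fun p : Fin n × Fin n => p.1 = i ∨ p.1 = j).image
    fun p => (Sum.inr (src G p.1 p.2), Sum.inl p.1)

theorem Reach.trans {M : ℕ} {a b c : Config V} {k1 k2 : ℕ}
    (h1 : Reach M a b k1) (h2 : Reach M b c k2) : Reach M a c (k1 + k2) := by
  induction h2 with
  | refl => simpa using h1
  | tail r s ih => exact (Nat.add_assoc _ _ _) ▸ Reach.tail ih s

theorem Reach.single {M : ℕ} {a b : Config V} {k : ℕ} (s : Step M a b k) :
    Reach M a b k := by
  simpa using Reach.tail (Reach.refl a) s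

theorem Reach.cast {M : ℕ} {a b b' : Config V} {k k' : ℕ}
    (h : Reach M a b k) (hb : b = b') (hk : k = k') : Reach M a b' k' := hb ▸ hk ▸ h

theorem Step.edges_subset {M : ℕ} {a b : Config V} {k : ℕ} (s : Step M a b k) :
    b.edges ⊆ a.edges := by
  cases s <;> simp [Finset.erase_subset]
/-- Lower-bound potential at a vertex. -/
def phi (c : Config V) (v : V) : ℕ :=
  (if c.peb v = none ∧ ∃ w, (v, w) ∈ c.edges then 1 else 0) +
  (if ∃ w, (w, v) ∈ c.edges then (if c.peb v = none then 2 else 1)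
   else (if c.peb v = some Pebble.blue then 1 else 0))

def Phi (c : Config V) : ℕ := ∑ v, phi c v

theorem Phi_le_of_pointwise {b c : Config V} {v : V} {k : ℕ}
    (h : ∀ w, phi b w ≤ phi c w + (if w = v then k else 0)) :
    Phi b ≤ Phi c + k := by
  calc Phi b ≤ ∑ w, (phi c w + (if w = v then k else 0)) := Finset.sum_le_sum fun w _ => h w
    _ = Phi c + k := by rw [Finset.sum_add_distrib]; simp [Phi]
theorem phi_step {M : ℕ} {b c : Config V} {k : ℕ}
    (hbip : ∀ x y z, (x, y) ∈ b.edges → (z, x) ∉ b.edges)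
    (s : Step M b c k) : Phi b ≤ Phi c + k := by
  cases s with
  | load v h hM =>
      apply Phi_le_of_pointwise (v := v)
      intro w
      by_cases hw : w = v
      · subst hw
        by_cases hin : ∃ x, (x, w) ∈ b.edges
        · have hout : ¬ ∃ x, (w, x) ∈ b.edges := by
            obtain ⟨x, hx⟩ := hin
            rintro ⟨z, hz⟩; exact hbip w z x hz hx
          simp [phi, h, hin, hout]
        · simp [phi, h, hin]
          split_ifs <;> omega
      · simp [phi, Function.update_of_ne hw]
  | remove v h =>
      apply Phi_le_of_pointwise (v := v)
      intro w
      by_cases hw : w = v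
      · subst hw
        (simp [phi, h]) <;> (split_ifs <;> omega)
      · simp [phi, Function.update_of_ne hw]
  | toBlue v h =>
      apply Phi_le_of_pointwise (v := v)
      intro w
      by_cases hw : w = v
      · subst hw
        (simp [phi, h]) <;> (split_ifs <;> omega)
      · simp [phi, Function.update_of_ne hw]
  | store v h =>
      apply Phi_le_of_pointwise (v := v)
      intro w
      by_cases hw : w = v
      · subst hw
        (simp [phi, h]) <;> (split_ifs <;> omega)
      · simp [phi, Function.update_of_ne hw]
  | compute u v he hleaf hu hv =>
      have huv : u ≠ v := by
        rintro rfl; exact hleaf u he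
      apply Phi_le_of_pointwise (v := v)
      intro w
      by_cases hw : w = v
      · subst hw
        have hin : ∃ x, (x, w) ∈ b.edges := ⟨u, he⟩
        have hsome : b.peb w ≠ none := by
          intro h0; rw [h0] at hv; simp at hv
        (simp [phi, hin, hsome]) <;> (split_ifs <;> omega)
      · have hpeb : Function.update b.peb v (some Pebble.blue) w = b.peb w :=
          Function.update_of_ne hw _ _
        by_cases hwu : w = u
        · subst hwu
          have hin1 : (∃ x, (x, w) ∈ b.edges) = False :=
            eq_false (by rintro ⟨x, hx⟩; exact hleaf x hx)
          have hin2 : (∃ x, (x, w) ∈ b.edges.erase (w, v)) = False :=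
            eq_false (by rintro ⟨x, hx⟩; exact hleaf x (Finset.mem_erase.1 hx).2)
          have hsome : (b.peb w = none) = False :=
            eq_false (by intro h0; rw [h0] at hu; simp at hu)
          simp only [phi, hpeb, hin1, hin2, hsome, false_and, if_false, and_false]
          omega
        · have hout : (∃ x, (w, x) ∈ b.edges.erase (u, v)) = (∃ x, (w, x) ∈ b.edges) := by
            apply propext; constructor
            · rintro ⟨x, hx⟩; exact ⟨x, (Finset.mem_erase.1 hx).2⟩
            · rintro ⟨x, hx⟩
              exact ⟨x, Finset.mem_erase.2 ⟨by simp [Prod.ext_iff]; intro h'; exact absurd h' hwu, hx⟩⟩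
          have hin : (∃ x, (x, w) ∈ b.edges.erase (u, v)) = (∃ x, (x, w) ∈ b.edges) := by
            apply propext; constructor
            · rintro ⟨x, hx⟩; exact ⟨x, (Finset.mem_erase.1 hx).2⟩
            · rintro ⟨x, hx⟩
              exact ⟨x, Finset.mem_erase.2 ⟨by simp [Prod.ext_iff]; intro _ h'; exact absurd h' hw, hx⟩⟩
          simp only [phi, hpeb, hout, hin]
          simp [hw]
theorem phi_reach {M : ℕ} {a c : Config V} {k : ℕ}
    (hbip : ∀ x y z, (x, y) ∈ a.edges → (z, x) ∉ a.edges)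
    (r : Reach M a c k) : c.edges ⊆ a.edges ∧ Phi a ≤ Phi c + k := by
  induction r with
  | refl => exact ⟨le_refl _, le_refl _⟩
  | tail r s ih =>
      obtain ⟨hsub, hP⟩ := ih
      refine ⟨s.edges_subset.trans hsub, ?_⟩
      have hb : ∀ x y z, (x, y) ∈ _ → (z, x) ∉ _ := fun x y z hxy hzx =>
        hbip x y z (hsub hxy) (hsub hzx)
      have := phi_step hb s
      omega

theorem Phi_final {c : Config V} (he : c.edges = ∅)
    (hb : ∀ v, c.peb v ≠ some Pebble.blue) : Phi c = 0 := by
  apply Finset.sum_eq_zero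
  intro v _
  simp [phi, he, hb v]

theorem Phi_init (E : Finset (V × V)) :
    Phi (⟨E, fun _ => none⟩ : Config V) =
      (E.image Prod.fst).card + 2 * (E.image Prod.snd).card := by
  have h1 : ∀ v : V, (∃ w, (v, w) ∈ E) ↔ v ∈ E.image Prod.fst := by
    intro v
    simp only [Finset.mem_image]
    constructor
    · rintro ⟨w, hw⟩; exact ⟨(v, w), hw, rfl⟩
    · rintro ⟨⟨x, y⟩, hxy, rfl⟩; exact ⟨y, hxy⟩
  have h2 : ∀ v : V, (∃ w, (w, v) ∈ E) ↔ v ∈ E.image Prod.snd := by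
    intro v
    simp only [Finset.mem_image]
    constructor
    · rintro ⟨w, hw⟩; exact ⟨(w, v), hw, rfl⟩
    · rintro ⟨⟨x, y⟩, hxy, rfl⟩; exact ⟨x, hxy⟩
  have : ∀ v : V, phi (⟨E, fun _ => none⟩ : Config V) v =
      (if v ∈ E.image Prod.fst then 1 else 0) + 2 * (if v ∈ E.image Prod.snd then 1 else 0) := by
    intro v
    simp only [phi, h1 v, h2 v]
    split_ifs <;> simp_all
  rw [Phi, Finset.sum_congr rfl fun v _ => this v, Finset.sum_add_distrib]
  congr 1
  · rw [Finset.sum_ite_mem, Finset.univ_inter, Finset.sum_const, smul_eq_mul, mul_one]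
  · rw [← Finset.mul_sum, Finset.sum_ite_mem, Finset.univ_inter, Finset.sum_const,
      smul_eq_mul, mul_one]
section Gadget
variable {n : ℕ} (G : SimpleGraph (Fin n)) [DecidableRel G.Adj]

theorem src_inj {i a b : Fin n} (h : src G i a = src G i b) : a = b := by
  unfold src at h
  split_ifs at h with h1 h2 h2 <;>
    simp only [Prod.mk.injEq] at h <;> omega

theorem src_cross {i j : Fin n} (hna : ¬ G.Adj i j) (hij : i ≠ j) (a b : Fin n) :
    src G i a ≠ src G j b := by
  intro h
  unfold src at h
  have hijne : (i : ℕ) ≠ (j : ℕ) := fun h' => hij (Fin.ext h')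
  split_ifs at h with h1 h2 h2 <;> simp only [Prod.mk.injEq] at h
  · -- (a,i) = (b,j): i = j
    exact hijne (by rw [h.2])
  · -- (a,i) = (j,b): a = j, i = b
    obtain ⟨rfl, rfl⟩ := h
    exact hna h1.1
  · -- (i,a) = (b,j): i = b, a = j
    obtain ⟨rfl, rfl⟩ := h
    exact hna (G.adj_symm h2.1)
  · exact hijne (by rw [h.1])

theorem src_shared {i j : Fin n} (ha : G.Adj i j) : src G j i = src G i j := by
  unfold src
  rcases lt_trichotomy i j with h | h | h
  · rw [if_pos ⟨G.adj_symm ha, h⟩, if_neg (fun hc => absurd (hc.2.trans h) (lt_irrefl _))]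
  · exact absurd h (G.ne_of_adj ha)
  · rw [if_neg (fun hc => absurd (hc.2.trans h) (lt_irrefl _)), if_pos ⟨ha, h⟩]

theorem mem_twoGadget {i j : Fin n} {x : (Fin n ⊕ Fin n × Fin n) × (Fin n ⊕ Fin n × Fin n)} :
    x ∈ twoGadgetEdges G i j ↔
      ∃ k, x = (Sum.inr (src G i k), Sum.inl i) ∨ x = (Sum.inr (src G j k), Sum.inl j) := by
  unfold twoGadgetEdges
  simp only [Finset.mem_image, Finset.mem_filter, Finset.mem_univ, true_and]
  constructor
  · rintro ⟨⟨a, b⟩, hab, rfl⟩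
    rcases hab with rfl | rfl
    · exact ⟨b, Or.inl rfl⟩
    · exact ⟨b, Or.inr rfl⟩
  · rintro ⟨k, rfl | rfl⟩
    · exact ⟨(i, k), Or.inl rfl, rfl⟩
    · exact ⟨(j, k), Or.inr rfl, rfl⟩

theorem twoGadget_bip {i j : Fin n} :
    ∀ x y z, (x, y) ∈ twoGadgetEdges G i j → (z, x) ∉ twoGadgetEdges G i j := by
  intro x y z hxy hzx
  rw [mem_twoGadget] at hxy hzx
  obtain ⟨k, hk⟩ := hxy
  obtain ⟨l, hl⟩ := hzx
  rcases hk with hk | hk <;> rcases hl with hl | hl <;>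
    simp only [Prod.mk.injEq] at hk hl <;>
    (obtain ⟨rfl, -⟩ := hk; simp at hl)

theorem lower_nonadj {i j : Fin n} (hn : 1 ≤ n) (hna : ¬ G.Adj i j) (hij : i ≠ j) :
    ∀ k ∈ Achievable 2 (twoGadgetEdges G i j), 2 * n + 4 ≤ k := by
  intro k hk
  obtain ⟨c', hr, he, hb⟩ := hk
  have h := phi_reach (twoGadget_bip G) hr
  rw [Phi_final he hb, Phi_init, zero_add] at h
  -- cardinality of sources
  set E := twoGadgetEdges G i j with hE
  have hsrc : ((Finset.univ.image fun k => (Sum.inr (src G i k) : Fin n ⊕ Fin n × Fin n)) ∪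
      (Finset.univ.image fun k => (Sum.inr (src G j k) : Fin n ⊕ Fin n × Fin n)))
      ⊆ E.image Prod.fst := by
    intro x hx
    rw [Finset.mem_union] at hx
    rcases hx with hx | hx <;> simp only [Finset.mem_image, Finset.mem_univ, true_and] at hx <;>
      obtain ⟨m, rfl⟩ := hx
    · exact Finset.mem_image.2 ⟨(Sum.inr (src G i m), Sum.inl i),
        (mem_twoGadget G).2 ⟨m, Or.inl rfl⟩, rfl⟩
    · exact Finset.mem_image.2 ⟨(Sum.inr (src G j m), Sum.inl j),
        (mem_twoGadget G).2 ⟨m, Or.inr rfl⟩, rfl⟩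
  have hdisj : Disjoint (Finset.univ.image fun k => (Sum.inr (src G i k) : Fin n ⊕ Fin n × Fin n))
      (Finset.univ.image fun k => (Sum.inr (src G j k) : Fin n ⊕ Fin n × Fin n)) := by
    rw [Finset.disjoint_left]
    intro x hx hx'
    simp only [Finset.mem_image, Finset.mem_univ, true_and] at hx hx'
    obtain ⟨a, rfl⟩ := hx
    obtain ⟨b, hb'⟩ := hx'
    refine src_cross G hna hij a b ?_
    injection hb' with h'
    exact h'.symm
  have hci : (Finset.univ.image fun k => (Sum.inr (src G i k) : Fin n ⊕ Fin n × Fin n)).card = n := by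
    rw [Finset.card_image_of_injective _ (fun a b hab => src_inj G (by injection hab))]
    simp
  have hcj : (Finset.univ.image fun k => (Sum.inr (src G j k) : Fin n ⊕ Fin n × Fin n)).card = n := by
    rw [Finset.card_image_of_injective _ (fun a b hab => src_inj G (by injection hab))]
    simp
  have hfst : 2 * n ≤ (E.image Prod.fst).card := by
    have := Finset.card_le_card hsrc
    rw [Finset.card_union_of_disjoint hdisj, hci, hcj] at this
    omega
  have hsnd : 2 ≤ (E.image Prod.snd).card := by
    have hsub : ({Sum.inl i, Sum.inl j} : Finset (Fin n ⊕ Fin n × Fin n)) ⊆ E.image Prod.snd := by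
      intro x hx
      rw [Finset.mem_insert, Finset.mem_singleton] at hx
      rcases hx with rfl | rfl
      · exact Finset.mem_image.2 ⟨(Sum.inr (src G i i), Sum.inl i),
          (mem_twoGadget G).2 ⟨i, Or.inl rfl⟩, rfl⟩
      · exact Finset.mem_image.2 ⟨(Sum.inr (src G j j), Sum.inl j),
          (mem_twoGadget G).2 ⟨j, Or.inr rfl⟩, rfl⟩
    have := Finset.card_le_card hsub
    rwa [Finset.card_pair (by simp [hij])] at this
  omega

end Gadget
/-- The configuration pebble function with a single pebble `p` at `t`. -/
def pset (t : V) (p : Pebble) : V → Option Pebble := fun v => if v = t then some p else none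

theorem pset_self (t : V) (p : Pebble) : pset t p t = some p := by simp [pset]

theorem pset_ne {t v : V} (p : Pebble) (h : v ≠ t) : pset t p v = none := by simp [pset, h]

theorem pebCount_pset (E : Finset (V × V)) (t : V) (p : Pebble) :
    pebCount (⟨E, pset t p⟩ : Config V) = 1 := by
  unfold pebCount
  have : (Finset.univ.filter fun v => ((pset t p) v).isSome) = {t} := by
    ext v
    by_cases hv : v = t <;> simp [pset, hv]
  rw [this, Finset.card_singleton]

theorem pebCount_none (E : Finset (V × V)) :
    pebCount (⟨E, fun _ => none⟩ : Config V) = 0 := by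
  simp [pebCount]

/-- Load a source, compute its edge to `t`, remove the source: net cost 1. -/
theorem oneSource {E : Finset (V × V)} {t s : V} (p : Pebble) (hst : s ≠ t)
    (he : (s, t) ∈ E) (hleaf : ∀ x, (x, s) ∉ E) :
    Reach 2 ⟨E, pset t p⟩ ⟨E.erase (s, t), pset t Pebble.blue⟩ 1 := by
  have s1 : Step 2 ⟨E, pset t p⟩ ⟨E, Function.update (pset t p) s (some Pebble.red)⟩ 1 :=
    Step.load _ s (pset_ne p hst) (by rw [pebCount_pset]; omega)
  have s2 : Step 2 ⟨E, Function.update (pset t p) s (some Pebble.red)⟩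
      ⟨E.erase (s, t), Function.update (Function.update (pset t p) s (some Pebble.red)) t
        (some Pebble.blue)⟩ 0 :=
    Step.compute _ s t he hleaf
      (by simp [Function.update, pset]) (by simp [Function.update, pset, Ne.symm hst])
  have s3 : Step 2 ⟨E.erase (s, t), Function.update (Function.update (pset t p) s
      (some Pebble.red)) t (some Pebble.blue)⟩
      ⟨E.erase (s, t), Function.update (Function.update (Function.update (pset t p) s
        (some Pebble.red)) t (some Pebble.blue)) s none⟩ 0 :=
    Step.remove _ s (by simp [Function.update, pset, hst])
  have hfun : Function.update (Function.update (Function.update (pset t p) s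
      (some Pebble.red)) t (some Pebble.blue)) s none = pset t Pebble.blue := by
    funext v
    by_cases hv : v = s
    · subst hv; simp [Function.update, pset, hst]
    · by_cases hvt : v = t
      · subst hvt; simp [Function.update, pset, Ne.symm hst]
      · simp [Function.update, pset, hv, hvt]
  exact ((Reach.single s1).tail s2).tail s3 |>.cast (by rw [hfun]) rfl

/-- Process every source in `S` (all pointing at `t`) one by one: cost `S.card`. -/
theorem loop (t : V) (S : Finset V) (E : Finset (V × V))
    (hS : ∀ s ∈ S, (s, t) ∈ E) (ht : ∀ s ∈ S, s ≠ t)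
    (hleaf : ∀ s ∈ S, ∀ x, (x, s) ∉ E) :
    Reach 2 ⟨E, pset t Pebble.blue⟩
      ⟨E \ S.image (fun s => (s, t)), pset t Pebble.blue⟩ S.card := by
  induction S using Finset.induction generalizing E with
  | empty => simpa using Reach.refl (⟨E, pset t Pebble.blue⟩ : Config V)
  | @insert s S hs ih =>
      have h1 := oneSource (E := E) Pebble.blue (ht s (Finset.mem_insert_self s S))
        (hS s (Finset.mem_insert_self s S)) (hleaf s (Finset.mem_insert_self s S))
      have h2 := ih (E := E.erase (s, t))
        (fun s' hs' => Finset.mem_erase.2 ⟨by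
          simp only [Ne, Prod.mk.injEq, not_and]
          intro h'; exact absurd h' (fun h'' => hs (h'' ▸ hs')),
          hS s' (Finset.mem_insert_of_mem hs')⟩)
        (fun s' hs' => ht s' (Finset.mem_insert_of_mem hs'))
        (fun s' hs' x hx => hleaf s' (Finset.mem_insert_of_mem hs') x (Finset.erase_subset _ _ hx))
      have hedge : E.erase (s, t) \ S.image (fun s' => (s', t)) =
          E \ (insert s S).image (fun s' => (s', t)) := by
        ext x
        simp only [Finset.mem_sdiff, Finset.mem_erase, Finset.mem_image, Finset.mem_insert]
        constructor
        · rintro ⟨⟨hne, hxE⟩, hnim⟩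
          exact ⟨hxE, by rintro ⟨a, rfl | ha, rfl⟩
                         · exact hne rfl
                         · exact hnim ⟨a, ha, rfl⟩⟩
        · rintro ⟨hxE, hnim⟩
          exact ⟨⟨fun h' => hnim ⟨s, Or.inl rfl, h'.symm⟩, hxE⟩,
            fun ⟨a, ha, h'⟩ => hnim ⟨a, Or.inr ha, h'⟩⟩
      exact (h1.trans h2).cast (by rw [hedge]) (by rw [Finset.card_insert_of_notMem hs]; omega)
/-- Pebble function with pebbles on two vertices. -/
def pset2 (t s : V) (pt ps : Pebble) : V → Option Pebble :=
  fun v => if v = t then some pt else if v = s then some ps else none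

theorem update_none_pset (t : V) (p : Pebble) :
    Function.update (fun _ : V => none) t (some p) = pset t p := by
  funext v; by_cases hv : v = t <;> simp [Function.update, pset, hv]

theorem update_pset_same (t : V) (p q : Pebble) :
    Function.update (pset t p) t (some q) = pset t q := by
  funext v; by_cases hv : v = t <;> simp [Function.update, pset, hv]

theorem update_pset_other {s t : V} (h : s ≠ t) (p q : Pebble) :
    Function.update (pset t p) s (some q) = pset2 t s p q := by
  funext v
  by_cases hv : v = s
  · subst hv; simp [Function.update, pset, pset2, h]
  · by_cases hvt : v = t <;> simp [Function.update, pset, pset2, hv, hvt, h, Ne.symm h]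

theorem pset2_at_t (t s : V) (pt ps : Pebble) : pset2 t s pt ps t = some pt := by
  simp [pset2]

theorem pset2_at_s {t s : V} (h : s ≠ t) (pt ps : Pebble) : pset2 t s pt ps s = some ps := by
  simp [pset2, h]

theorem update_pset2_t {t s : V} (h : s ≠ t) (pt ps q : Pebble) :
    Function.update (pset2 t s pt ps) t (some q) = pset2 t s q ps := by
  funext v
  by_cases hv : v = t
  · subst hv; simp [Function.update, pset2]
  · by_cases hvs : v = s <;> simp [Function.update, pset2, hv, hvs, h, Ne.symm h]

theorem update_pset2_t_none {t s : V} (h : s ≠ t) (pt ps : Pebble) :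
    Function.update (pset2 t s pt ps) t none = pset s ps := by
  funext v
  by_cases hv : v = t
  · subst hv; simp [Function.update, pset, pset2, Ne.symm h]
  · by_cases hvs : v = s <;> simp [Function.update, pset, pset2, hv, hvs, h, Ne.symm h]

theorem update_pset2_s_none {t s : V} (h : s ≠ t) (pt ps : Pebble) :
    Function.update (pset2 t s pt ps) s none = pset t pt := by
  funext v
  by_cases hv : v = s
  · subst hv; simp [Function.update, pset, pset2, h]
  · by_cases hvt : v = t <;> simp [Function.update, pset, pset2, hv, hvt, h, Ne.symm h]

theorem pset2_swap {t s : V} (h : s ≠ t) (pt ps : Pebble) :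
    pset2 t s pt ps = pset2 s t ps pt := by
  funext v
  by_cases hv : v = t
  · subst hv; simp [pset2, Ne.symm h]
  · by_cases hvs : v = s <;> simp [pset2, hv, hvs, h, Ne.symm h]
section Construction
variable {n : ℕ} (G : SimpleGraph (Fin n)) [DecidableRel G.Adj]

theorem adj_achievable {i j : Fin n} (hn : 1 ≤ n) (ha : G.Adj i j) :
    (2 * n + 3) ∈ Achievable 2 (twoGadgetEdges G i j) := by
  classical
  have hij : i ≠ j := G.ne_of_adj ha
  set E := twoGadgetEdges G i j with hE
  set ti : Fin n ⊕ Fin n × Fin n := Sum.inl i with hti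
  set tj : Fin n ⊕ Fin n × Fin n := Sum.inl j with htj
  set ss : Fin n ⊕ Fin n × Fin n := Sum.inr (src G i j) with hss
  have hss_ti : ss ≠ ti := by simp [hss, hti]
  have hss_tj : ss ≠ tj := by simp [hss, htj]
  have hti_tj : ti ≠ tj := by simp [hti, htj, hij]
  have hmemi : ∀ k, ((Sum.inr (src G i k) : Fin n ⊕ Fin n × Fin n), ti) ∈ E :=
    fun k => (mem_twoGadget G).2 ⟨k, Or.inl rfl⟩
  have hmemj : ∀ k, ((Sum.inr (src G j k) : Fin n ⊕ Fin n × Fin n), tj) ∈ E :=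
    fun k => (mem_twoGadget G).2 ⟨k, Or.inr rfl⟩
  have hleafE : ∀ (q : Fin n × Fin n) (x : Fin n ⊕ Fin n × Fin n), (x, Sum.inr q) ∉ E := by
    intro q x hx
    obtain ⟨k, hk | hk⟩ := (mem_twoGadget G).1 hx <;> simp [Prod.ext_iff] at hk
  set P1 : Finset (Fin n ⊕ Fin n × Fin n) :=
    (Finset.univ.erase j).image (fun k => Sum.inr (src G i k)) with hP1
  set P2 : Finset (Fin n ⊕ Fin n × Fin n) :=
    (Finset.univ.erase i).image (fun k => Sum.inr (src G j k)) with hP2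
  have hinji : Function.Injective (fun k => (Sum.inr (src G i k) : Fin n ⊕ Fin n × Fin n)) :=
    fun a b h => src_inj G (by injection h)
  have hinjj : Function.Injective (fun k => (Sum.inr (src G j k) : Fin n ⊕ Fin n × Fin n)) :=
    fun a b h => src_inj G (by injection h)
  have hP1card : P1.card = n - 1 := by
    rw [hP1, Finset.card_image_of_injective _ hinji,
      Finset.card_erase_of_mem (Finset.mem_univ j), Finset.card_univ, Fintype.card_fin]
  have hP2card : P2.card = n - 1 := by
    rw [hP2, Finset.card_image_of_injective _ hinjj,
      Finset.card_erase_of_mem (Finset.mem_univ i), Finset.card_univ, Fintype.card_fin]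
  set E1 := E \ P1.image (fun s => (s, ti)) with hE1
  set E2 := E1.erase (ss, ti) with hE2
  set E3 := E2.erase (ss, tj) with hE3
  set E4 := E3 \ P2.image (fun s => (s, tj)) with hE4
  have hE1sub : E1 ⊆ E := Finset.sdiff_subset
  have hE2sub : E2 ⊆ E := (Finset.erase_subset _ _).trans hE1sub
  have hE3sub : E3 ⊆ E := (Finset.erase_subset _ _).trans hE2sub
  -- memberships
  have f1 : (ss, ti) ∈ E1 := by
    rw [hE1, Finset.mem_sdiff]
    refine ⟨hmemi j, ?_⟩
    rw [Finset.mem_image]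
    rintro ⟨s', hs', heq⟩
    obtain ⟨k, hk, rfl⟩ := Finset.mem_image.1 hs'
    have hkj : k ≠ j := (Finset.mem_erase.1 hk).1
    have : (Sum.inr (src G i k) : Fin n ⊕ Fin n × Fin n) = ss := (Prod.ext_iff.1 heq).1
    rw [hss] at this
    exact hkj (src_inj G (by injection this))
  have f2 : (ss, tj) ∈ E2 := by
    rw [hE2, Finset.mem_erase]
    refine ⟨by simp [Prod.ext_iff, Ne.symm hti_tj], ?_⟩
    rw [hE1, Finset.mem_sdiff]
    constructor
    · have := hmemj i
      rwa [src_shared G ha, ← hss] at this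
    · rw [Finset.mem_image]
      rintro ⟨s', hs', heq⟩
      exact hti_tj ((Prod.ext_iff.1 heq).2)
  have f3 : ∀ s ∈ P2, (s, tj) ∈ E3 := by
    intro s hs
    obtain ⟨k, hk, rfl⟩ := Finset.mem_image.1 hs
    have hki : k ≠ i := (Finset.mem_erase.1 hk).1
    rw [hE3, Finset.mem_erase]
    constructor
    · simp only [Ne, Prod.mk.injEq, not_and]
      intro h' _
      rw [hss] at h'
      have : src G j k = src G i j := by injection h'
      rw [← src_shared G ha] at this
      exact hki (src_inj G this)
    · rw [hE2, Finset.mem_erase]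
      refine ⟨by simp [Prod.ext_iff, Ne.symm hti_tj], ?_⟩
      rw [hE1, Finset.mem_sdiff]
      refine ⟨hmemj k, ?_⟩
      rw [Finset.mem_image]
      rintro ⟨s', hs', heq⟩
      exact hti_tj ((Prod.ext_iff.1 heq).2)
  -- the final edge set is empty
  have hfinal : E4 = ∅ := by
    rw [Finset.eq_empty_iff_forall_notMem]
    intro x hx
    rw [hE4, Finset.mem_sdiff] at hx
    obtain ⟨hx3, hxP2⟩ := hx
    rw [hE3, Finset.mem_erase] at hx3
    obtain ⟨hne3, hx2⟩ := hx3
    rw [hE2, Finset.mem_erase] at hx2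
    obtain ⟨hne2, hx1⟩ := hx2
    rw [hE1, Finset.mem_sdiff] at hx1
    obtain ⟨hxE, hxP1⟩ := hx1
    obtain ⟨k, hk | hk⟩ := (mem_twoGadget G).1 hxE
    · by_cases hkj : k = j
      · exact hne2 (by rw [hk, hkj, hss])
      · exact hxP1 (Finset.mem_image.2 ⟨Sum.inr (src G i k),
          Finset.mem_image.2 ⟨k, Finset.mem_erase.2 ⟨hkj, Finset.mem_univ k⟩, rfl⟩, hk.symm⟩)
    · by_cases hki : k = i
      · refine hne3 ?_
        rw [hk, hki, hss, src_shared G ha]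
      · exact hxP2 (Finset.mem_image.2 ⟨Sum.inr (src G j k),
          Finset.mem_image.2 ⟨k, Finset.mem_erase.2 ⟨hki, Finset.mem_univ k⟩, rfl⟩, hk.symm⟩)
  -- the pebbling strategy
  have r1 : Reach 2 ⟨E, fun _ => none⟩ ⟨E, pset ti Pebble.red⟩ 1 :=
    (Reach.single (Step.load _ ti rfl (by rw [pebCount_none]; omega))).cast
      (by rw [update_none_pset]) rfl
  have r2 : Reach 2 ⟨E, fun _ => none⟩ ⟨E, pset ti Pebble.blue⟩ 1 :=
    (r1.tail (Step.toBlue _ ti (pset_self ti Pebble.red))).cast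
      (by rw [update_pset_same]) rfl
  have r3 : Reach 2 ⟨E, fun _ => none⟩ ⟨E1, pset ti Pebble.blue⟩ n := by
    refine (r2.trans (loop ti P1 E ?_ ?_ ?_)).cast (by rw [hE1]) (by rw [hP1card]; omega)
    · intro s hs
      obtain ⟨k, hk, rfl⟩ := Finset.mem_image.1 hs
      exact hmemi k
    · intro s hs
      obtain ⟨k, hk, rfl⟩ := Finset.mem_image.1 hs
      simp [hti]
    · intro s hs x
      obtain ⟨k, hk, rfl⟩ := Finset.mem_image.1 hs
      exact hleafE _ x
  have r4 : Reach 2 ⟨E, fun _ => none⟩ ⟨E1, pset2 ti ss Pebble.blue Pebble.red⟩ (n + 1) :=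
    (r3.tail (Step.load _ ss (pset_ne Pebble.blue hss_ti) (by rw [pebCount_pset]; omega))).cast
      (by rw [update_pset_other hss_ti]) rfl
  have r5 : Reach 2 ⟨E, fun _ => none⟩ ⟨E2, pset2 ti ss Pebble.blue Pebble.red⟩ (n + 1) :=
    (r4.tail (Step.compute _ ss ti f1 (fun x hx => hleafE _ x (hE1sub hx))
        (by simp [pset2_at_s hss_ti]) (by simp [pset2_at_t]))).cast
      (by rw [update_pset2_t hss_ti, ← hE2]) rfl
  have r6 : Reach 2 ⟨E, fun _ => none⟩ ⟨E2, pset2 ti ss Pebble.red Pebble.red⟩ (n + 2) :=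
    (r5.tail (Step.store _ ti (pset2_at_t ti ss _ _))).cast
      (by rw [update_pset2_t hss_ti]) rfl
  have r7 : Reach 2 ⟨E, fun _ => none⟩ ⟨E2, pset ss Pebble.red⟩ (n + 2) :=
    (r6.tail (Step.remove _ ti (pset2_at_t ti ss _ _))).cast
      (by rw [update_pset2_t_none hss_ti]) rfl
  have r8 : Reach 2 ⟨E, fun _ => none⟩ ⟨E2, pset2 tj ss Pebble.red Pebble.red⟩ (n + 3) :=
    (r7.tail (Step.load _ tj (pset_ne Pebble.red (Ne.symm hss_tj)) (by rw [pebCount_pset]; omega))).cast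
      (by rw [update_pset_other (Ne.symm hss_tj), pset2_swap (Ne.symm hss_tj)]) rfl
  have r9 : Reach 2 ⟨E, fun _ => none⟩ ⟨E2, pset2 tj ss Pebble.blue Pebble.red⟩ (n + 3) :=
    (r8.tail (Step.toBlue _ tj (pset2_at_t tj ss _ _))).cast
      (by rw [update_pset2_t hss_tj]) rfl
  have r10 : Reach 2 ⟨E, fun _ => none⟩ ⟨E3, pset2 tj ss Pebble.blue Pebble.red⟩ (n + 3) :=
    (r9.tail (Step.compute _ ss tj f2 (fun x hx => hleafE _ x (hE2sub hx))
        (by simp [pset2_at_s hss_tj]) (by simp [pset2_at_t]))).cast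
      (by rw [update_pset2_t hss_tj, ← hE3]) rfl
  have r11 : Reach 2 ⟨E, fun _ => none⟩ ⟨E3, pset tj Pebble.blue⟩ (n + 3) :=
    (r10.tail (Step.remove _ ss (pset2_at_s hss_tj Pebble.blue Pebble.red))).cast
      (by rw [update_pset2_s_none hss_tj]) rfl
  have r12 : Reach 2 ⟨E, fun _ => none⟩ ⟨E4, pset tj Pebble.blue⟩ (2 * n + 2) := by
    refine (r11.trans (loop tj P2 E3 f3 ?_ ?_)).cast (by rw [hE4]) (by rw [hP2card]; omega)
    · intro s hs
      obtain ⟨k, hk, rfl⟩ := Finset.mem_image.1 hs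
      simp [htj]
    · intro s hs x
      obtain ⟨k, hk, rfl⟩ := Finset.mem_image.1 hs
      exact fun hx => hleafE _ x (hE3sub hx)
  have r13 : Reach 2 ⟨E, fun _ => none⟩ ⟨E4, pset tj Pebble.red⟩ (2 * n + 3) :=
    (r12.tail (Step.store _ tj (pset_self tj Pebble.blue))).cast
      (by rw [update_pset_same]) rfl
  refine ⟨⟨E4, pset tj Pebble.red⟩, r13, hfinal, ?_⟩
  intro v
  by_cases hv : v = tj <;> simp [pset, hv]

end Construction

/-- in the `(2,1)`-I/O model with partial computations, the two gadgets
`g_i` and `g_j` (`i ≠ j`) can both be fully eliminated (all their `2n` edges deleted and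
both results stored) at a total cost of `2n + 3` iff `(v_i, v_j)` is an edge of `G`;
otherwise every such strategy costs at least `2n + 4`. -/
theorem stmt12 (n : ℕ) (hn : 1 ≤ n) (G : SimpleGraph (Fin n)) [DecidableRel G.Adj]
    (i j : Fin n) (hij : i ≠ j) :
    (G.Adj i j ↔ (2 * n + 3) ∈ Achievable 2 (twoGadgetEdges G i j)) ∧
    (¬ G.Adj i j → ∀ k ∈ Achievable 2 (twoGadgetEdges G i j), 2 * n + 4 ≤ k) := by
  refine ⟨⟨fun ha => adj_achievable G hn ha, fun hach => ?_⟩,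
    fun hna k hk => lower_nonadj G hn hna hij k hk⟩
  by_contra hna
  have := lower_nonadj G hn hna hij _ hach
  omega
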